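/- arXiv:2106.12531 — 6 statements merged into one kernel-verified Lean document; each statement's English description precedes it below -/
import Mathlib

section
/- Let N be an odd positive integer and for n ∈ {1,…,N} set c_n = n − 1 − (N−1)/2. Let L_s > 0, z_g > 0, and let g : ℝ → ℂ be integrable with g(z) = 0 for all |z| > z_g/2 (i.e., g is supported in an interval of total length z_g centered at 0). Define G(κ) = ∫_ℝ g(z) e^{−iκz} dz. If L_r ≥ L_s + z_g, then for all n, m ∈ {1,…,N} the double integral H_{nm} = ∫_{−L_r/2}^{L_r/2} ∫_{−L_s/2}^{L_s/2} g(r − s) · e^{−i 2π c_n r/L_s} · (1/√L_s) e^{i 2π c_m s/L_s} ds dr satisfies H_{nm} = √L_s · G(2π c_n/L_s) if n = m, and H_{nm} = 0 if n ≠ m. -/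
open MeasureTheory Filter Real

/-- Corollary 2 of the paper: if the spatially-invariant channel response `g` is supported in
`[−z_g/2, z_g/2]` and the receiver excess length satisfies `L_r ≥ L_s + z_g`, then the WDM
coupling coefficients are exactly orthogonal:
`H_{nm} = √L_s · G(2π c_n/L_s)` for `n = m` and `H_{nm} = 0` for `n ≠ m`. -/
theorem wdm_orthogonality_with_oversized_receiver
    (N : ℕ) (hN : Odd N) (hNpos : 0 < N)
    (Ls zg : ℝ) (hLs : 0 < Ls) (hzg : 0 < zg)
    (g : ℝ → ℂ) (hg : Integrable g)
    (hgsupp : ∀ z : ℝ, zg / 2 < |z| → g z = 0)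
    (G : ℝ → ℂ)
    (hG : ∀ κ : ℝ, G κ = ∫ z : ℝ, g z * Complex.exp (-Complex.I * κ * z))
    (Lr : ℝ) (hLr : Ls + zg ≤ Lr)
    (n m : ℕ) (hn : n ∈ Finset.Icc 1 N) (hm : m ∈ Finset.Icc 1 N)
    (cn cm : ℝ)
    (hcn : cn = (n : ℝ) - 1 - ((N : ℝ) - 1) / 2)
    (hcm : cm = (m : ℝ) - 1 - ((N : ℝ) - 1) / 2) :
    (∫ r in (-(Lr / 2))..(Lr / 2), ∫ s in (-(Ls / 2))..(Ls / 2),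
        g (r - s) * Complex.exp (-Complex.I * (2 * π * cn * r / Ls)) *
          ((1 / Real.sqrt Ls : ℝ) : ℂ) * Complex.exp (Complex.I * (2 * π * cm * s / Ls)))
      = if n = m then ((Real.sqrt Ls : ℝ) : ℂ) * G (2 * π * cn / Ls) else 0 := by
  have hLr0 : 0 < Lr := lt_of_lt_of_le (by linarith) hLr
  have h1 : -(Lr / 2) ≤ Lr / 2 := by linarith
  have h2 : -(Ls / 2) ≤ Ls / 2 := by linarith
  have hLsC : (Ls : ℂ) ≠ 0 := by exact_mod_cast hLs.ne'
  set c0 : ℂ := ((1 / Real.sqrt Ls : ℝ) : ℂ) with hc0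
  set F : ℝ → ℝ → ℂ := fun r s =>
    g (r - s) * Complex.exp (-Complex.I * (2 * π * cn * r / Ls)) * c0 *
      Complex.exp (Complex.I * (2 * π * cm * s / Ls)) with hF
  -- integrability of the integrand on the rectangle
  have hFint : Integrable (Function.uncurry F)
      ((volume.restrict (Set.Ioc (-(Lr/2)) (Lr/2))).prod
        (volume.restrict (Set.Ioc (-(Ls/2)) (Ls/2)))) := by
    rw [Measure.prod_restrict]
    set f : ℝ → ℂ := (Set.Ioc (-(Ls/2)) (Ls/2)).indicator
        (fun s => c0 * Complex.exp (Complex.I * (2 * π * cm * s / Ls))) with hf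
    have hfi : Integrable f := by
      rw [hf, integrable_indicator_iff measurableSet_Ioc]
      apply Continuous.integrableOn_Ioc
      continuity
    have H1 := hfi.convolution_integrand (ContinuousLinearMap.mul ℝ ℂ) hg
    have H2 : Integrable (fun p : ℝ × ℝ =>
        Complex.exp (-Complex.I * (2 * π * cn * p.1 / Ls)) * (f p.2 * g (p.1 - p.2)))
        (volume.prod volume) := by
      apply H1.bdd_mul (c := 1)
      · exact (Continuous.aestronglyMeasurable (by fun_prop))
      · refine Filter.Eventually.of_forall (fun p => ?_)
        have : (-Complex.I * (2 * π * cn * (p.1:ℝ) / Ls))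
            = ((-(2 * π * cn * p.1 / Ls) : ℝ) : ℂ) * Complex.I := by
          push_cast; ring
        rw [this, Complex.norm_exp_ofReal_mul_I]
    refine (H2.integrableOn.mono_set Set.Subset.rfl).congr ?_
    rw [Filter.eventuallyEq_iff_exists_mem]
    refine ⟨Set.Ioc (-(Lr/2)) (Lr/2) ×ˢ Set.Ioc (-(Ls/2)) (Ls/2), ?_, fun p hp => ?_⟩
    · exact self_mem_ae_restrict (measurableSet_Ioc.prod measurableSet_Ioc)
    · simp only [Function.uncurry, hF]
      rw [hf, Set.indicator_of_mem hp.2]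
      ring
  -- Fubini: swap the order of integration
  have hswap :
      (∫ r in (-(Lr / 2))..(Lr / 2), ∫ s in (-(Ls / 2))..(Ls / 2), F r s)
      = ∫ s in Set.Ioc (-(Ls/2)) (Ls/2), ∫ r in Set.Ioc (-(Lr/2)) (Lr/2), F r s := by
    simp only [intervalIntegral.integral_of_le h1, intervalIntegral.integral_of_le h2]
    exact MeasureTheory.integral_integral_swap hFint
  -- inner integral over r, for s in the source interval
  have hinner : ∀ s : ℝ, -(Ls/2) ≤ s → s ≤ Ls/2 →
      (∫ r in (-(Lr/2))..(Lr/2), g (r - s) * Complex.exp (-Complex.I * (2 * π * cn * r / Ls)))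
        = G (2 * π * cn / Ls) * Complex.exp (-Complex.I * (2 * π * cn * s / Ls)) := by
    intro s hs1 hs2
    have step1 : ∀ r : ℝ, g (r - s) * Complex.exp (-Complex.I * (2 * π * cn * r / Ls))
        = (fun u : ℝ => g u * Complex.exp (-Complex.I * (2 * π * cn * (u + s) / Ls))) (r - s) := by
      intro r; simp [sub_add_cancel]
    rw [intervalIntegral.integral_congr (g := fun r =>
        (fun u : ℝ => g u * Complex.exp (-Complex.I * (2 * π * cn * (u + s) / Ls))) (r - s))
        (fun r _ => step1 r)]
    rw [intervalIntegral.integral_comp_sub_right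
        (fun u : ℝ => g u * Complex.exp (-Complex.I * (2 * π * cn * (u + s) / Ls))) s]
    have step2 : ∀ u : ℝ, g u * Complex.exp (-Complex.I * (2 * π * cn * (u + s) / Ls))
        = (g u * Complex.exp (-Complex.I * ((2 * π * cn / Ls : ℝ) : ℂ) * u)) *
            Complex.exp (-Complex.I * (2 * π * cn * s / Ls)) := by
      intro u
      rw [mul_assoc (g u), ← Complex.exp_add]
      congr 2
      push_cast
      field_simp
      ring
    rw [intervalIntegral.integral_congr (fun u _ => step2 u),
        intervalIntegral.integral_mul_const]
    congr 1
    have hsupp : ∀ u : ℝ, u ∉ Set.Icc (-(Lr/2) - s) (Lr/2 - s) →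
        g u * Complex.exp (-Complex.I * ((2 * π * cn / Ls : ℝ) : ℂ) * u) = 0 := by
      intro u hu
      have hL : -(Lr/2) - s ≤ -(zg/2) := by linarith
      have hR : zg/2 ≤ Lr/2 - s := by linarith
      have : g u = 0 := by
        apply hgsupp
        simp only [Set.mem_Icc, not_and_or, not_le] at hu
        rcases hu with h | h
        · rw [abs_of_neg (by linarith)]; linarith
        · rw [abs_of_pos (by linarith)]; linarith
      simp [this]
    have hle : -(Lr/2) - s ≤ Lr/2 - s := by linarith
    rw [intervalIntegral.integral_of_le hle, hG]
    rw [← MeasureTheory.integral_Icc_eq_integral_Ioc]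
    exact setIntegral_eq_integral_of_forall_compl_eq_zero hsupp
  -- outer integral computation
  rw [hswap, ← intervalIntegral.integral_of_le h2]
  have houter : ∀ s ∈ Set.uIcc (-(Ls/2)) (Ls/2),
      (∫ r in Set.Ioc (-(Lr/2)) (Lr/2), F r s)
        = (c0 * G (2 * π * cn / Ls)) *
            Complex.exp ((Complex.I * ((2 * π * (cm - cn) / Ls : ℝ) : ℂ)) * s) := by
    intro s hs
    rw [Set.uIcc_of_le h2, Set.mem_Icc] at hs
    rw [← intervalIntegral.integral_of_le h1]
    have : ∀ r : ℝ, F r s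
        = (g (r - s) * Complex.exp (-Complex.I * (2 * π * cn * r / Ls))) *
            (c0 * Complex.exp (Complex.I * (2 * π * cm * s / Ls))) := by
      intro r; rw [hF]; ring
    rw [intervalIntegral.integral_congr (fun r _ => this r),
        intervalIntegral.integral_mul_const, hinner s hs.1 hs.2]
    have hprod : Complex.exp (Complex.I * (2 * π * cm * s / Ls)) *
        Complex.exp (-Complex.I * (2 * π * cn * s / Ls))
        = Complex.exp ((Complex.I * ((2 * π * (cm - cn) / Ls : ℝ) : ℂ)) * s) := by
      rw [← Complex.exp_add]
      congr 1
      push_cast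
      field_simp
      ring
    rw [← hprod]
    ring
  rw [intervalIntegral.integral_congr houter, intervalIntegral.integral_const_mul]
  by_cases hnm : n = m
  · subst hnm
    have hcc : cm = cn := by rw [hcm, hcn]
    rw [if_pos rfl, hcc]
    simp only [sub_self, mul_zero, zero_div, zero_mul, Complex.ofReal_zero, mul_zero,
      Complex.exp_zero]
    rw [intervalIntegral.integral_const]
    have hb : (Ls/2) - (-(Ls/2)) = Ls := by ring
    rw [hb, Complex.real_smul, mul_one, hc0]
    have hsq : (1 / Real.sqrt Ls) * Ls = Real.sqrt Ls := by
      rw [div_mul_eq_mul_div, one_mul, ← Real.mul_self_sqrt hLs.le]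
      field_simp
      rw [Real.sqrt_sq (Real.sqrt_nonneg _)]
    have hfin : ((Real.sqrt Ls : ℝ) : ℂ) = ((1 / Real.sqrt Ls : ℝ) : ℂ) * (Ls : ℂ) := by
      rw [← Complex.ofReal_mul, hsq]
    rw [hfin]
    ring
  · rw [if_neg hnm]
    have hmn : (m : ℝ) ≠ (n : ℝ) := by
      simp only [ne_eq, Nat.cast_inj]
      exact fun h => hnm h.symm
    have hkne : cm - cn ≠ 0 := by
      rw [hcm, hcn]; intro h; apply hmn; linarith
    have h2pi : (2 * π * (cm - cn) / Ls : ℝ) ≠ 0 :=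
      div_ne_zero (mul_ne_zero (by positivity) hkne) hLs.ne'
    have hcne : (Complex.I * ((2 * π * (cm - cn) / Ls : ℝ) : ℂ)) ≠ 0 :=
      mul_ne_zero Complex.I_ne_zero (Complex.ofReal_ne_zero.mpr h2pi)
    rw [integral_exp_mul_complex hcne]
    have hk : cm - cn = (m : ℝ) - n := by rw [hcm, hcn]; ring
    have hd1 : (2 * π * (cm - cn) / Ls) * (Ls/2) = π * (cm - cn) := by
      field_simp
    have hd2 : (2 * π * (cm - cn) / Ls) * (-(Ls/2)) = -(π * (cm - cn)) := by
      field_simp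
    have eb : (Complex.I * ((2 * π * (cm - cn) / Ls : ℝ) : ℂ)) * ((Ls/2 : ℝ) : ℂ)
        = Complex.I * ((π * (cm - cn) : ℝ) : ℂ) := by
      rw [mul_assoc, ← Complex.ofReal_mul, hd1]
    have ea : (Complex.I * ((2 * π * (cm - cn) / Ls : ℝ) : ℂ)) * ((-(Ls/2) : ℝ) : ℂ)
        = Complex.I * ((-(π * (cm - cn)) : ℝ) : ℂ) := by
      rw [mul_assoc, ← Complex.ofReal_mul, hd2]
    have e2 : Complex.I * ((π * (cm - cn) : ℝ) : ℂ)
        = Complex.I * ((-(π * (cm - cn)) : ℝ) : ℂ)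
          + (((m : ℤ) - (n : ℤ) : ℤ) : ℂ) * (2 * (π : ℂ) * Complex.I) := by
      rw [hk]
      push_cast
      ring
    rw [eb, ea, e2, Complex.exp_add, Complex.exp_int_mul_two_pi_mul_I, mul_one, sub_self,
      zero_div, mul_zero]
end

section
/- Let S : ℝ → ℂ be bounded, measurable and integrable, and let a, b ∈ ℝ with a ≠ b. Then lim_{L→∞} (L/(2π)) ∫_ℝ S(κ) · sinc((κ − a)·L/(2π)) · sinc((κ − b)·L/(2π)) dκ = 0. -/
open MeasureTheory Filter Real

/-- The normalized _root_.sinc function: `_root_.sinc x = sin (π x) / (π x)` for `x ≠ 0`, `_root_.sinc 0 = 1`. -/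
noncomputable def sinc (x : ℝ) : ℝ :=
  if x = 0 then 1 else Real.sin (π * x) / (π * x)

lemma abs_sinc_le_one (x : ℝ) : |_root_.sinc x| ≤ 1 := by
  unfold _root_.sinc
  split_ifs with h
  · simp
  · rw [abs_div, div_le_one (abs_pos.mpr (mul_ne_zero Real.pi_ne_zero h))]
    exact Real.abs_sin_le_abs

lemma abs_sinc_le (x : ℝ) (h : x ≠ 0) : |_root_.sinc x| ≤ 1 / (π * |x|) := by
  unfold _root_.sinc
  rw [if_neg h, abs_div, abs_mul, abs_of_pos Real.pi_pos]
  gcongr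
  · exact Real.abs_sin_le_one _

lemma measurable_sinc : Measurable _root_.sinc := by
  unfold _root_.sinc
  exact Measurable.ite (by simp) measurable_const
    ((Real.measurable_sin.comp (measurable_const.mul measurable_id)).div
      (measurable_const.mul measurable_id))

lemma sinc_tendsto_zero (c : ℝ) (κ : ℝ) (h : κ ≠ c) :
    Tendsto (fun L : ℝ => |_root_.sinc ((κ - c) * L / (2 * π))|) atTop (nhds 0) := by
  have hc : κ - c ≠ 0 := sub_ne_zero.mpr h
  apply squeeze_zero' (Eventually.of_forall fun L => abs_nonneg _)
  · filter_upwards [eventually_gt_atTop 0] with L hL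
    have hx : (κ - c) * L / (2 * π) ≠ 0 := by
      apply div_ne_zero (mul_ne_zero hc hL.ne') (by positivity)
    calc |_root_.sinc ((κ - c) * L / (2 * π))| ≤ 1 / (π * |(κ - c) * L / (2 * π)|) :=
          abs_sinc_le _ hx
      _ = 2 / (|κ - c| * L) := by
          rw [abs_div, abs_mul, abs_of_pos hL, abs_of_pos (by positivity : (0:ℝ) < 2 * π)]
          field_simp
  · have h1 : Tendsto (fun L : ℝ => |κ - c| * L) atTop atTop :=
      Tendsto.const_mul_atTop (abs_pos.mpr hc) tendsto_id
    simpa using tendsto_const_nhds.div_atTop h1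

lemma sinc_far_bound (c κ L d : ℝ) (hd : 0 < d) (hdc : d ≤ |κ - c|) (hL : 0 < L) :
    |_root_.sinc ((κ - c) * L / (2 * π))| ≤ 2 / (d * L) := by
  have hc : κ - c ≠ 0 := by
    intro h0; rw [h0] at hdc; simp at hdc; linarith
  have hx : (κ - c) * L / (2 * π) ≠ 0 := div_ne_zero (mul_ne_zero hc hL.ne') (by positivity)
  calc |_root_.sinc ((κ - c) * L / (2 * π))| ≤ 1 / (π * |(κ - c) * L / (2 * π)|) := abs_sinc_le _ hx
    _ = 2 / (|κ - c| * L) := by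
        rw [abs_div, abs_mul, abs_of_pos hL, abs_of_pos (by positivity : (0:ℝ) < 2 * π)]
        field_simp
    _ ≤ 2 / (d * L) := by gcongr

lemma sinc_key_bound (a b κ L : ℝ) (hab : a ≠ b) (hL : 0 < L) :
    L / (2 * π) * (|_root_.sinc ((κ - a) * L / (2 * π))| * |_root_.sinc ((κ - b) * L / (2 * π))|) ≤
      1 / (π * (|a - b| / 2)) *
        (|_root_.sinc ((κ - a) * L / (2 * π))| + |_root_.sinc ((κ - b) * L / (2 * π))|) := by
  set d : ℝ := |a - b| / 2 with hdDef
  have hd : 0 < d := by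
    have : a - b ≠ 0 := sub_ne_zero.mpr hab
    have := abs_pos.mpr this
    simp only [hdDef]; linarith
  have htri : 2 * d ≤ |κ - a| + |κ - b| := by
    have h1 : |a - b| ≤ |a - κ| + |κ - b| := abs_sub_le a κ b
    rw [abs_sub_comm a κ] at h1
    simp only [hdDef]; linarith
  set sa := |_root_.sinc ((κ - a) * L / (2 * π))| with hsa
  set sb := |_root_.sinc ((κ - b) * L / (2 * π))| with hsb
  have hsa0 : 0 ≤ sa := abs_nonneg _
  have hsb0 : 0 ≤ sb := abs_nonneg _
  rcases le_or_gt d |κ - a| with hca | hca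
  · have h2 : sa ≤ 2 / (d * L) := sinc_far_bound a κ L d hd hca hL
    calc L / (2 * π) * (sa * sb) ≤ L / (2 * π) * (2 / (d * L) * sb) := by
          have h3 : sa * sb ≤ 2 / (d * L) * sb := mul_le_mul_of_nonneg_right h2 hsb0
          have h4 : (0:ℝ) ≤ L / (2 * π) := by positivity
          exact mul_le_mul_of_nonneg_left h3 h4
      _ = 1 / (π * d) * sb := by field_simp
      _ ≤ 1 / (π * d) * (sa + sb) := by
          have : (0:ℝ) ≤ 1 / (π * d) := by positivity
          nlinarith
  · have hcb : d ≤ |κ - b| := by linarith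
    have h2 : sb ≤ 2 / (d * L) := sinc_far_bound b κ L d hd hcb hL
    calc L / (2 * π) * (sa * sb) ≤ L / (2 * π) * (sa * (2 / (d * L))) := by
          have h3 : sa * sb ≤ sa * (2 / (d * L)) := mul_le_mul_of_nonneg_left h2 hsa0
          have h4 : (0:ℝ) ≤ L / (2 * π) := by positivity
          exact mul_le_mul_of_nonneg_left h3 h4
      _ = 1 / (π * d) * sa := by field_simp
      _ ≤ 1 / (π * d) * (sa + sb) := by
          have : (0:ℝ) ≤ 1 / (π * d) := by positivity
          nlinarith

/-- Off-diagonal vanishing of products of scaled sinc kernels with distinct centers: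
`(L/(2π)) ∫ S(κ) sinc((κ − a) L/(2π)) sinc((κ − b) L/(2π)) dκ → 0` as `L → ∞` when `a ≠ b`. -/
theorem sinc_product_distinct_centers_vanishes
    (S : ℝ → ℂ) (hSbdd : ∃ M : ℝ, ∀ κ : ℝ, ‖S κ‖ ≤ M) (hSmeas : Measurable S)
    (hSint : Integrable S) (a b : ℝ) (hab : a ≠ b) :
    Tendsto
      (fun L : ℝ =>
        ((L / (2 * π) : ℝ) : ℂ) * ∫ κ : ℝ,
          S κ * ((_root_.sinc ((κ - a) * L / (2 * π)) : ℝ) : ℂ) *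
            ((_root_.sinc ((κ - b) * L / (2 * π)) : ℝ) : ℂ))
      atTop (nhds 0) := by
  set d : ℝ := |a - b| / 2 with hdDef
  have hd : 0 < d := by
    have := abs_pos.mpr (sub_ne_zero.mpr hab)
    simp only [hdDef]; linarith
  set F : ℝ → ℝ → ℝ := fun L κ =>
    ‖S κ‖ * (|_root_.sinc ((κ - a) * L / (2 * π))| + |_root_.sinc ((κ - b) * L / (2 * π))|) with hFdef
  have hFmeas : ∀ L : ℝ, Measurable (F L) := by
    intro L
    apply (hSmeas.norm).mul
    exact ((_root_.measurable_sinc.comp (by fun_prop)).abs.add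
      (_root_.measurable_sinc.comp (by fun_prop)).abs)
  have hFnonneg : ∀ L κ, 0 ≤ F L κ := fun L κ => by
    apply mul_nonneg (norm_nonneg _)
    exact add_nonneg (abs_nonneg _) (abs_nonneg _)
  have hFle : ∀ L κ, F L κ ≤ 2 * ‖S κ‖ := fun L κ => by
    have h1 := _root_.abs_sinc_le_one ((κ - a) * L / (2 * π))
    have h2 := _root_.abs_sinc_le_one ((κ - b) * L / (2 * π))
    have h0 := norm_nonneg (S κ)
    have h1' := abs_nonneg (_root_.sinc ((κ - a) * L / (2 * π)))
    have h2' := abs_nonneg (_root_.sinc ((κ - b) * L / (2 * π)))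
    simp only [hFdef]
    nlinarith
  have hFint : ∀ L : ℝ, Integrable (F L) := by
    intro L
    apply Integrable.mono' (hSint.norm.const_mul 2) ((hFmeas L).aestronglyMeasurable)
    filter_upwards with κ
    rw [Real.norm_eq_abs, abs_of_nonneg (hFnonneg L κ)]
    exact hFle L κ
  -- almost everywhere, κ ≠ a and κ ≠ b
  have hae : ∀ᵐ κ : ℝ, κ ≠ a ∧ κ ≠ b := by
    have ha : ∀ᵐ κ : ℝ, κ ≠ a := by
      rw [ae_iff]
      simp only [not_not, Set.setOf_eq_eq_singleton]
      exact measure_singleton a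
    have hb : ∀ᵐ κ : ℝ, κ ≠ b := by
      rw [ae_iff]
      simp only [not_not, Set.setOf_eq_eq_singleton]
      exact measure_singleton b
    exact ha.and hb
  -- dominated convergence
  have hg : Tendsto (fun L : ℝ => ∫ κ : ℝ, F L κ) atTop (nhds 0) := by
    have := MeasureTheory.tendsto_integral_filter_of_dominated_convergence
      (μ := (volume : Measure ℝ)) (F := F) (f := fun _ => (0:ℝ))
      (bound := fun κ => 2 * ‖S κ‖)
      (Eventually.of_forall fun L => (hFmeas L).aestronglyMeasurable)
      (Eventually.of_forall fun L => Eventually.of_forall fun κ => by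
        rw [Real.norm_eq_abs, abs_of_nonneg (hFnonneg L κ)]; exact hFle L κ)
      (hSint.norm.const_mul 2)
      (by
        filter_upwards [hae] with κ hκ
        have ha' := sinc_tendsto_zero a κ hκ.1
        have hb' := sinc_tendsto_zero b κ hκ.2
        have := ((ha'.add hb').const_mul ‖S κ‖)
        simpa using this)
    simpa using this
  -- squeeze
  rw [show (0 : ℂ) = 0 from rfl]
  rw [tendsto_zero_iff_norm_tendsto_zero]
  apply squeeze_zero' (Eventually.of_forall fun L => norm_nonneg _)
    (g := fun L => 1 / (π * d) * ∫ κ : ℝ, F L κ)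
  · filter_upwards [eventually_gt_atTop 0] with L hL
    have hnorm : ‖((L / (2 * π) : ℝ) : ℂ) * ∫ κ : ℝ,
        S κ * ((_root_.sinc ((κ - a) * L / (2 * π)) : ℝ) : ℂ) *
          ((_root_.sinc ((κ - b) * L / (2 * π)) : ℝ) : ℂ)‖
        = (L / (2 * π)) * ‖∫ κ : ℝ,
        S κ * ((_root_.sinc ((κ - a) * L / (2 * π)) : ℝ) : ℂ) *
          ((_root_.sinc ((κ - b) * L / (2 * π)) : ℝ) : ℂ)‖ := by
      rw [norm_mul, Complex.norm_real, Real.norm_eq_abs,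
        abs_of_pos (by positivity : (0:ℝ) < L / (2 * π))]
    rw [hnorm]
    have step1 : ‖∫ κ : ℝ,
        S κ * ((_root_.sinc ((κ - a) * L / (2 * π)) : ℝ) : ℂ) *
          ((_root_.sinc ((κ - b) * L / (2 * π)) : ℝ) : ℂ)‖
        ≤ ∫ κ : ℝ, ‖S κ‖ * (|_root_.sinc ((κ - a) * L / (2 * π))| * |_root_.sinc ((κ - b) * L / (2 * π))|) := by
      refine le_trans (norm_integral_le_integral_norm _) (le_of_eq ?_)
      congr 1
      funext κ
      rw [norm_mul, norm_mul, Complex.norm_real, Complex.norm_real,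
        Real.norm_eq_abs, Real.norm_eq_abs, mul_assoc]
    calc L / (2 * π) * ‖∫ κ : ℝ,
          S κ * ((_root_.sinc ((κ - a) * L / (2 * π)) : ℝ) : ℂ) *
            ((_root_.sinc ((κ - b) * L / (2 * π)) : ℝ) : ℂ)‖
        ≤ L / (2 * π) * ∫ κ : ℝ, ‖S κ‖ *
            (|_root_.sinc ((κ - a) * L / (2 * π))| * |_root_.sinc ((κ - b) * L / (2 * π))|) := by
          exact mul_le_mul_of_nonneg_left step1 (by positivity)
      _ = ∫ κ : ℝ, L / (2 * π) * (‖S κ‖ *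
            (|_root_.sinc ((κ - a) * L / (2 * π))| * |_root_.sinc ((κ - b) * L / (2 * π))|)) := by
          rw [MeasureTheory.integral_const_mul]
      _ ≤ ∫ κ : ℝ, 1 / (π * d) * F L κ := by
          apply integral_mono_of_nonneg
          · filter_upwards with κ
            have : (0:ℝ) ≤ ‖S κ‖ * (|_root_.sinc ((κ - a) * L / (2 * π))| *
                |_root_.sinc ((κ - b) * L / (2 * π))|) := by positivity
            positivity
          · exact (hFint L).const_mul _
          · filter_upwards with κ
            have hkey := sinc_key_bound a b κ L hab hL
            have hS0 := norm_nonneg (S κ)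
            simp only [hFdef, hdDef]
            nlinarith [abs_nonneg (_root_.sinc ((κ - a) * L / (2 * π))),
              abs_nonneg (_root_.sinc ((κ - b) * L / (2 * π)))]
      _ = 1 / (π * d) * ∫ κ : ℝ, F L κ := by rw [MeasureTheory.integral_const_mul]
  · have := hg.const_mul (1 / (π * d))
    simpa using this
end

section
/- Let κ > 0 and z ∈ ℝ with z ≠ 0. Then ∫_{−π}^{π} ∫_{π/3}^{2π/3} (sin θ)/(2π) · e^{−i κ z cos θ} dθ dφ = sin(κ z/2)/(κ z/2). -/
open MeasureTheory Filter Real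

/-- Non-isotropic EMI correlation claim of the paper: with waves uniformly distributed over
elevation `θ ∈ [π/3, 2π/3)` and azimuth `φ ∈ [−π, π)`, the spatial correlation along the
`z`-axis is `sin(κz/2)/(κz/2)`. -/
theorem nonisotropic_emi_correlation
    (κ : ℝ) (hκ : 0 < κ) (z : ℝ) (hz : z ≠ 0) :
    (∫ φ in (-π)..π, ∫ θ in (π / 3)..(2 * π / 3),
        ((Real.sin θ / (2 * π) : ℝ) : ℂ) *
          Complex.exp (-Complex.I * κ * ((z * Real.cos θ : ℝ) : ℂ)))
      = ((Real.sin (κ * z / 2) / (κ * z / 2) : ℝ) : ℂ) := by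
  set c : ℂ := Complex.I * κ * z with hc
  have hc0 : c ≠ 0 := by
    simp [hc, Complex.I_ne_zero, Complex.ofReal_ne_zero, hκ.ne', hz]
  have hπ : (π : ℝ) ≠ 0 := Real.pi_ne_zero
  -- inner integral
  have inner : (∫ θ in (π / 3)..(2 * π / 3),
        ((Real.sin θ / (2 * π) : ℝ) : ℂ) *
          Complex.exp (-Complex.I * κ * ((z * Real.cos θ : ℝ) : ℂ)))
      = (Complex.exp (c/2) - Complex.exp (-(c/2))) / c / (2*π) := by
    have key : ∀ θ ∈ Set.uIcc (π/3) (2*π/3),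
        HasDerivAt (fun t : ℝ => Complex.exp (-c * Real.cos t) / c / (2*π))
          (((Real.sin θ / (2 * π) : ℝ) : ℂ) *
            Complex.exp (-Complex.I * κ * ((z * Real.cos θ : ℝ) : ℂ))) θ := by
      intro θ _
      have h1 : HasDerivAt (fun t : ℝ => ((Real.cos t : ℝ) : ℂ)) (-Real.sin θ) θ := by
        simpa using (Real.hasDerivAt_cos θ).ofReal_comp
      have h2 : HasDerivAt (fun t : ℝ => -c * ((Real.cos t : ℝ) : ℂ)) (-c * (-Real.sin θ)) θ :=
        h1.const_mul (-c)
      have h3 := (h2.cexp.div_const c).div_const (2*π)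
      have hval : Complex.exp (-c * ((Real.cos θ : ℝ) : ℂ)) * (-c * -((Real.sin θ : ℝ) : ℂ)) / c / (2*(π:ℝ))
          = ((Real.sin θ / (2 * π) : ℝ) : ℂ) *
              Complex.exp (-Complex.I * κ * ((z * Real.cos θ : ℝ) : ℂ)) := by
        rw [neg_mul_neg, show c * ((Real.sin θ : ℝ) : ℂ) = ((Real.sin θ : ℝ) : ℂ) * c from
          mul_comm _ _, ← mul_assoc, mul_div_assoc _ c c, div_self hc0, mul_one]
        rw [hc]
        push_cast
        ring_nf
      rw [← hval]
      exact h3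
    rw [intervalIntegral.integral_eq_sub_of_hasDerivAt key]
    · have hcos1 : Real.cos (π/3) = 1/2 := Real.cos_pi_div_three
      have hcos2 : Real.cos (2*π/3) = -(1/2) := by
        have : (2*π/3 : ℝ) = π - π/3 := by ring
        rw [this, Real.cos_pi_sub, Real.cos_pi_div_three]
      rw [hcos1, hcos2]
      push_cast
      ring_nf
    · apply ContinuousOn.intervalIntegrable
      fun_prop
  rw [intervalIntegral.integral_congr (g := fun _ : ℝ =>
      (Complex.exp (c/2) - Complex.exp (-(c/2))) / c / (2*π)) (fun φ _ => inner)]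
  rw [intervalIntegral.integral_const]
  have hdiff : Complex.exp (c/2) - Complex.exp (-(c/2))
      = 2 * Real.sin (κ*z/2) * Complex.I := by
    have e1 : c/2 = ((κ*z/2 : ℝ) : ℂ) * Complex.I := by rw [hc]; push_cast; ring
    have e2 : -(c/2) = (-(κ*z/2 : ℝ) : ℂ) * Complex.I := by rw [hc]; push_cast; ring
    rw [e1, show -(((κ * z / 2 : ℝ) : ℂ) * Complex.I) = ((-(κ * z / 2) : ℝ) : ℂ) * Complex.I by
      push_cast; ring, Complex.exp_mul_I, Complex.exp_mul_I]
    push_cast [Complex.cos_neg, Complex.sin_neg]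
    ring
  rw [hdiff, hc]
  have hκz : (κ : ℂ) * z ≠ 0 := by
    simp [Complex.ofReal_ne_zero, hκ.ne', hz]
  have hκz' : (κ * z / 2 : ℝ) ≠ 0 := by
    simp [hκ.ne', hz]
  push_cast
  rw [Complex.real_smul]
  push_cast
  field_simp
  ring_nf
end

section
/- Let N be an odd positive integer and for m ∈ {1,…,N} set c_m = m − 1 − (N−1)/2 and f_m = c_m/T, where T > 0. Let T_g > 0 and T_s ≥ T + T_g, let x₁,…,x_N ∈ ℂ, and define x(t) = (1/√T_s) Σ_{m=1}^{N} x_m e^{i 2π f_m t} for 0 ≤ t ≤ T_s and x(t) = 0 otherwise. Let g : ℝ → ℂ be integrable with g(t) = 0 for t ∉ [0, T_g], and let G(f) = ∫_0^{T_g} g(t) e^{−i 2π f t} dt. Then for every n ∈ {1,…,N}, ∫_{T_g}^{T_g + T} (g ∗ x)(t) · e^{−i 2π f_n t} dt = (T/√T_s) · G(f_n) · x_n, where (g ∗ x)(t) = ∫_ℝ g(τ) x(t − τ) dτ. -/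
open MeasureTheory Filter Real

set_option maxHeartbeats 1000000

/-- OFDM orthogonality with a cyclic-prefix-length symbol (Section IV-A, eqs. (35)–(37)):
with symbol duration `T_s ≥ T + T_g` and observation window `[T_g, T_g + T]`, projecting the
channel output onto subcarrier `n` yields `y_n = (T/√T_s) G(f_n) x_n`. -/
theorem ofdm_orthogonality_cyclic_prefix
    (N : ℕ) (hN : Odd N) (hNpos : 0 < N)
    (T Tg Ts : ℝ) (hT : 0 < T) (hTg : 0 < Tg) (hTs : T + Tg ≤ Ts)
    (c : ℕ → ℝ) (hc : ∀ m, c m = (m : ℝ) - 1 - ((N : ℝ) - 1) / 2)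
    (f : ℕ → ℝ) (hf : ∀ m, f m = c m / T)
    (X : ℕ → ℂ)
    (x : ℝ → ℂ)
    (hx : ∀ t : ℝ, x t =
      if t ∈ Set.Icc (0 : ℝ) Ts then
        ((1 / Real.sqrt Ts : ℝ) : ℂ) *
          ∑ m ∈ Finset.Icc 1 N, X m * Complex.exp (Complex.I * (2 * π * f m * t))
      else 0)
    (g : ℝ → ℂ) (hg : Integrable g)
    (hgsupp : ∀ t : ℝ, t ∉ Set.Icc (0 : ℝ) Tg → g t = 0)
    (G : ℝ → ℂ)
    (hG : ∀ ν : ℝ, G ν = ∫ t in (0 : ℝ)..Tg, g t * Complex.exp (-Complex.I * (2 * π * ν * t)))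
    (n : ℕ) (hn : n ∈ Finset.Icc 1 N) :
    (∫ t in Tg..(Tg + T),
        (∫ τ : ℝ, g τ * x (t - τ)) * Complex.exp (-Complex.I * (2 * π * f n * t)))
      = ((T / Real.sqrt Ts : ℝ) : ℂ) * G (f n) * X n := by

  obtain ⟨hn1, hnN⟩ := Finset.mem_Icc.mp hn
  have hTne : T ≠ 0 := ne_of_gt hT
  set sc : ℂ := ((1 / Real.sqrt Ts : ℝ) : ℂ) with hsc
  -- integrability of g against a character
  have hgexp : ∀ ν : ℝ,
      Integrable (fun τ : ℝ => g τ * Complex.exp (-Complex.I * (2 * π * ν * τ))) := by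
    intro ν
    apply Integrable.mono' hg.norm
    · exact hg.aestronglyMeasurable.mul
        (Continuous.aestronglyMeasurable (by continuity))
    · filter_upwards with τ
      rw [norm_mul]
      have h1 : ‖Complex.exp (-Complex.I * (2 * π * ν * τ))‖ = 1 := by
        rw [show -Complex.I * (2 * π * ν * τ)
            = ((-(2 * π * ν * τ) : ℝ) : ℂ) * Complex.I by push_cast; ring]
        exact Complex.norm_exp_ofReal_mul_I _
      rw [h1, mul_one]
  -- the full-line integral equals G
  have hGint : ∀ ν : ℝ,
      (∫ τ : ℝ, g τ * Complex.exp (-Complex.I * (2 * π * ν * τ))) = G ν := by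
    intro ν
    rw [hG, intervalIntegral.integral_of_le hTg.le,
      ← MeasureTheory.integral_Icc_eq_integral_Ioc,
      MeasureTheory.setIntegral_eq_integral_of_forall_compl_eq_zero
        (fun τ hτ => by rw [hgsupp τ hτ, zero_mul])]
  -- the frequency difference
  have hdiff : ∀ m : ℕ, f m - f n = ((m : ℝ) - n) / T := by
    intro m
    rw [hf m, hf n, div_sub_div_same, hc, hc]
    congr 1; ring
  -- inner convolution integral
  have inner : ∀ t ∈ Set.uIcc Tg (Tg + T),
      (∫ τ : ℝ, g τ * x (t - τ))
        = ∑ m ∈ Finset.Icc 1 N,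
            sc * X m * G (f m) * Complex.exp (Complex.I * (2 * π * f m * t)) := by
    intro t ht
    rw [Set.uIcc_of_le (by linarith)] at ht
    obtain ⟨ht1, ht2⟩ := ht
    have hpt : ∀ τ : ℝ, g τ * x (t - τ)
        = ∑ m ∈ Finset.Icc 1 N,
            sc * X m * Complex.exp (Complex.I * (2 * π * f m * t)) *
              (g τ * Complex.exp (-Complex.I * (2 * π * f m * τ))) := by
      intro τ
      by_cases hτ : τ ∈ Set.Icc (0 : ℝ) Tg
      · obtain ⟨hτ1, hτ2⟩ := hτ
        have hmem : t - τ ∈ Set.Icc (0 : ℝ) Ts := ⟨by linarith, by linarith⟩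
        rw [hx, if_pos hmem, Finset.mul_sum, Finset.mul_sum]
        refine Finset.sum_congr rfl fun m _ => ?_
        have hsplit : Complex.I * (2 * π * f m * ((t : ℝ) - τ : ℝ))
            = Complex.I * (2 * π * f m * t) + -Complex.I * (2 * π * f m * τ) := by
          push_cast; ring
        rw [hsplit, Complex.exp_add]; ring
      · rw [hgsupp τ hτ]
        simp
    rw [integral_congr_ae (Filter.Eventually.of_forall hpt)]
    rw [MeasureTheory.integral_finset_sum _
      (fun m _ => ((hgexp (f m)).const_mul _))]
    refine Finset.sum_congr rfl fun m _ => ?_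
    rw [MeasureTheory.integral_const_mul, hGint (f m)]
    ring
  -- compute each subcarrier integral
  have hint : ∀ m ∈ Finset.Icc 1 N,
      (∫ t in Tg..(Tg + T),
          Complex.exp (Complex.I * (2 * π * ((((m : ℝ) - n) / T : ℝ)) * t)))
        = if m = n then (T : ℂ) else 0 := by
    intro m _
    by_cases hmn : m = n
    · subst hmn
      rw [if_pos rfl]
      simp only [sub_self, zero_div, Complex.ofReal_zero, mul_zero, zero_mul,
        Complex.exp_zero]
      rw [intervalIntegral.integral_const]
      push_cast
      rw [Complex.real_smul]
      push_cast; ring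
    · rw [if_neg hmn]
      have hd : ((m : ℝ) - n) ≠ 0 := sub_ne_zero.mpr (by exact_mod_cast hmn)
      have hd' : (((m : ℝ) - n) / T) ≠ 0 := div_ne_zero hd hTne
      have hc0 : (Complex.I * (2 * π * ((((m : ℝ) - n) / T : ℝ) : ℂ))) ≠ 0 := by
        apply mul_ne_zero Complex.I_ne_zero
        apply mul_ne_zero
        · apply mul_ne_zero two_ne_zero
          exact_mod_cast Complex.ofReal_ne_zero.mpr Real.pi_ne_zero
        · exact Complex.ofReal_ne_zero.mpr hd'
      have hshape : ∀ t : ℝ, Complex.I * (2 * π * ((((m : ℝ) - n) / T : ℝ)) * t)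
          = (Complex.I * (2 * π * ((((m : ℝ) - n) / T : ℝ) : ℂ))) * t := fun t => by
        ring
      simp_rw [hshape]
      rw [integral_exp_mul_complex hc0]
      have hcT : (Complex.I * (2 * π * ((((m : ℝ) - n) / T : ℝ) : ℂ))) * (T : ℂ)
          = (((m : ℤ) - n : ℤ) : ℂ) * (2 * π * Complex.I) := by
        have hTc : (T : ℂ) ≠ 0 := Complex.ofReal_ne_zero.mpr hTne
        push_cast
        field_simp
      have hexp : Complex.exp ((Complex.I * (2 * π * ((((m : ℝ) - n) / T : ℝ) : ℂ))) * ((Tg : ℝ) + T : ℝ))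
          = Complex.exp ((Complex.I * (2 * π * ((((m : ℝ) - n) / T : ℝ) : ℂ))) * (Tg : ℂ)) := by
        rw [show ((Complex.I * (2 * π * ((((m : ℝ) - n) / T : ℝ) : ℂ))) * (((Tg : ℝ) + T : ℝ) : ℂ))
            = (Complex.I * (2 * π * ((((m : ℝ) - n) / T : ℝ) : ℂ))) * (Tg : ℂ)
              + (Complex.I * (2 * π * ((((m : ℝ) - n) / T : ℝ) : ℂ))) * (T : ℂ) by push_cast; ring,
          Complex.exp_add, hcT, Complex.exp_int_mul_two_pi_mul_I, mul_one]
      rw [hexp, sub_self, zero_div]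
  -- main computation
  calc (∫ t in Tg..(Tg + T),
        (∫ τ : ℝ, g τ * x (t - τ)) * Complex.exp (-Complex.I * (2 * π * f n * t)))
      = ∫ t in Tg..(Tg + T), ∑ m ∈ Finset.Icc 1 N,
          sc * X m * G (f m) *
            Complex.exp (Complex.I * (2 * π * ((((m : ℝ) - n) / T : ℝ)) * t)) := by
        apply intervalIntegral.integral_congr
        intro t ht
        dsimp only
        rw [inner t ht, Finset.sum_mul]
        refine Finset.sum_congr rfl fun m _ => ?_
        rw [mul_assoc, ← Complex.exp_add]
        congr 2
        have hcast : ((((m : ℝ) - n) / T : ℝ) : ℂ) = ((f m : ℝ) : ℂ) - ((f n : ℝ) : ℂ) := by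
          rw [← hdiff m]; push_cast; ring
        rw [hcast]; ring
    _ = ∑ m ∈ Finset.Icc 1 N, sc * X m * G (f m) *
          ∫ t in Tg..(Tg + T),
            Complex.exp (Complex.I * (2 * π * ((((m : ℝ) - n) / T : ℝ)) * t)) := by
        rw [intervalIntegral.integral_finset_sum (fun m _ =>
          Continuous.intervalIntegrable (by fun_prop) _ _)]
        simp_rw [intervalIntegral.integral_const_mul]
    _ = ∑ m ∈ Finset.Icc 1 N, sc * X m * G (f m) * (if m = n then (T : ℂ) else 0) :=
        Finset.sum_congr rfl fun m hm => by rw [hint m hm]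
    _ = sc * X n * G (f n) * T := by
        rw [Finset.sum_eq_single n (fun m _ hm => by rw [if_neg hm, mul_zero])
          (fun h => absurd hn h), if_pos rfl]
    _ = ((T / Real.sqrt Ts : ℝ) : ℂ) * G (f n) * X n := by
        rw [hsc]; push_cast; ring
end

section
/- Let N be an odd positive integer and for m ∈ {1,…,N} set c_m = m − 1 − (N−1)/2 and f_m = c_m/T, where T > 0. Let T_g > 0 and T_r ≥ T + T_g, let x₁,…,x_N ∈ ℂ, and define x(t) = (1/√T) Σ_{m=1}^{N} x_m e^{i 2π f_m t} for 0 ≤ t ≤ T and x(t) = 0 otherwise. Let g : ℝ → ℂ be integrable with g(t) = 0 for t ∉ [0, T_g], and let G(f) = ∫_0^{T_g} g(t) e^{−i 2π f t} dt. Then for every n ∈ {1,…,N}, ∫_{0}^{T_r} (g ∗ x)(t) · e^{−i 2π f_n t} dt = √T · G(f_n) · x_n, where (g ∗ x)(t) = ∫_ℝ g(τ) x(t − τ) dτ. -/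
open MeasureTheory Filter Real

set_option maxHeartbeats 1000000

/-- OFDM orthogonality with an oversized observation window (Section IV-A, eqs. (38)–(39)):
with symbol duration `T` (no cyclic prefix) and observation window `[0, T_r]` with
`T_r ≥ T + T_g`, projecting the channel output onto subcarrier `n` yields
`y_n = √T · G(f_n) · x_n`. -/
theorem ofdm_orthogonality_extended_observation
    (N : ℕ) (hN : Odd N) (hNpos : 0 < N)
    (T Tg Tr : ℝ) (hT : 0 < T) (hTg : 0 < Tg) (hTr : T + Tg ≤ Tr)
    (c : ℕ → ℝ) (hc : ∀ m, c m = (m : ℝ) - 1 - ((N : ℝ) - 1) / 2)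
    (f : ℕ → ℝ) (hf : ∀ m, f m = c m / T)
    (X : ℕ → ℂ)
    (x : ℝ → ℂ)
    (hx : ∀ t : ℝ, x t =
      if t ∈ Set.Icc (0 : ℝ) T then
        ((1 / Real.sqrt T : ℝ) : ℂ) *
          ∑ m ∈ Finset.Icc 1 N, X m * Complex.exp (Complex.I * (2 * π * f m * t))
      else 0)
    (g : ℝ → ℂ) (hg : Integrable g)
    (hgsupp : ∀ t : ℝ, t ∉ Set.Icc (0 : ℝ) Tg → g t = 0)
    (G : ℝ → ℂ)
    (hG : ∀ ν : ℝ, G ν = ∫ t in (0 : ℝ)..Tg, g t * Complex.exp (-Complex.I * (2 * π * ν * t)))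
    (n : ℕ) (hn : n ∈ Finset.Icc 1 N) :
    (∫ t in (0 : ℝ)..Tr,
        (∫ τ : ℝ, g τ * x (t - τ)) * Complex.exp (-Complex.I * (2 * π * f n * t)))
      = ((Real.sqrt T : ℝ) : ℂ) * G (f n) * X n := by
  set e : ℝ → ℂ := fun t => Complex.exp (-Complex.I * (2 * π * f n * t)) with he
  set φ : ℝ → ℂ := fun t => ((1 / Real.sqrt T : ℝ) : ℂ) *
      ∑ m ∈ Finset.Icc 1 N, X m * Complex.exp (Complex.I * (2 * π * f m * t)) with hφ
  have hTC : (T : ℂ) ≠ 0 := by exact_mod_cast hT.ne'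
  have hφcont : Continuous φ := by
    apply Continuous.mul continuous_const
    apply continuous_finset_sum
    intro m _
    exact continuous_const.mul (Complex.continuous_exp.comp (by fun_prop))
  have hxind : x = Set.indicator (Set.Icc (0:ℝ) T) φ := by
    funext t
    rw [hx t, Set.indicator_apply]
  have hxint : Integrable x := by
    rw [hxind]
    exact (hφcont.integrableOn_Icc).integrable_indicator measurableSet_Icc
  have he1 : ∀ t : ℝ, ‖e t‖ = 1 := by
    intro t
    rw [he]
    simp only []
    rw [Complex.norm_exp]
    simp
  have headd : ∀ s τ : ℝ, e (s + τ) = e τ * e s := by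
    intro s τ
    rw [he]
    simp only []
    rw [← Complex.exp_add]
    congr 1
    push_cast
    ring
  have hecont : Continuous e := by
    rw [he]; fun_prop
  -- integrability of the full double integrand
  have hK : Integrable (fun p : ℝ × ℝ => g p.2 * x (p.1 - p.2)) (volume.prod volume) := by
    simpa using hg.convolution_integrand (ContinuousLinearMap.mul ℝ ℂ) hxint
  have hF : Integrable (fun p : ℝ × ℝ => g p.2 * x (p.1 - p.2) * e p.1) (volume.prod volume) := by
    have h2 : Integrable (fun p : ℝ × ℝ => e p.1 * (g p.2 * x (p.1 - p.2))) (volume.prod volume) :=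
      hK.bdd_mul (hecont.comp continuous_fst).aestronglyMeasurable (c := 1) (ae_of_all _ fun p => (he1 p.1).le)
    have h3 : (fun p : ℝ × ℝ => g p.2 * x (p.1 - p.2) * e p.1)
        = fun p : ℝ × ℝ => e p.1 * (g p.2 * x (p.1 - p.2)) := by
      funext p; ring
    rw [h3]; exact h2
  -- the convolution vanishes outside Ioc 0 Tr
  have hzero : ∀ t : ℝ, t ∉ Set.Ioc (0:ℝ) Tr → (∫ τ : ℝ, g τ * x (t - τ)) = 0 := by
    intro t ht
    have hae : ∀ᵐ τ : ℝ, g τ * x (t - τ) = 0 := by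
      rw [MeasureTheory.ae_iff]
      refine measure_mono_null ?_ (measure_singleton (0:ℝ))
      intro τ hτ
      simp only [Set.mem_setOf_eq] at hτ
      have hgτ : g τ ≠ 0 := fun h => hτ (by rw [h, zero_mul])
      have hxτ : x (t - τ) ≠ 0 := fun h => hτ (by rw [h, mul_zero])
      have h1 : τ ∈ Set.Icc (0:ℝ) Tg := by
        by_contra hcc; exact hgτ (hgsupp τ hcc)
      have h2 : t - τ ∈ Set.Icc (0:ℝ) T := by
        by_contra hcc
        exact hxτ (by rw [hx (t - τ), if_neg hcc])
      rw [Set.mem_Ioc, not_and_or, not_lt, not_le] at ht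
      rcases ht with ht | ht
      · have hτ0 : τ = 0 := le_antisymm (by linarith [h2.1]) h1.1
        simpa using hτ0
      · exfalso
        have : t ≤ T + Tg := by
          have := h2.2; have := h1.2; linarith
        linarith
    calc (∫ τ : ℝ, g τ * x (t - τ)) = ∫ _ : ℝ, (0:ℂ) := integral_congr_ae hae
      _ = 0 := integral_zero _ _
  have hTr0 : (0:ℝ) ≤ Tr := le_trans (by positivity) hTr
  -- translation identity for the inner integral
  have hkey : ∀ τ : ℝ, (∫ t : ℝ, x (t - τ) * e t) = e τ * ∫ s : ℝ, x s * e s := by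
    intro τ
    rw [← integral_add_right_eq_self (fun t => x (t - τ) * e t) τ]
    simp only [add_sub_cancel_right]
    rw [← integral_const_mul]
    congr 1
    funext s
    rw [headd s τ]
    ring
  -- the x-integral
  have hxe : (∫ s : ℝ, x s * e s) = ((Real.sqrt T : ℝ) : ℂ) * X n := by
    have h1 : (∫ s : ℝ, x s * e s) = ∫ s in Set.Icc (0:ℝ) T, x s * e s := by
      refine (setIntegral_eq_integral_of_forall_compl_eq_zero ?_).symm
      intro s hs
      rw [hx s, if_neg hs, zero_mul]
    rw [h1, MeasureTheory.integral_Icc_eq_integral_Ioc,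
      ← intervalIntegral.integral_of_le hT.le]
    have h2 : ∫ s in (0:ℝ)..T, x s * e s = ∫ s in (0:ℝ)..T, φ s * e s := by
      refine intervalIntegral.integral_congr ?_
      intro s hs
      rw [Set.uIcc_of_le hT.le] at hs
      show x s * e s = φ s * e s
      rw [hx s, if_pos hs]
    rw [h2]
    have h3 : ∀ s : ℝ, φ s * e s
        = ((1 / Real.sqrt T : ℝ) : ℂ) *
          ∑ m ∈ Finset.Icc 1 N, X m * (Complex.exp (Complex.I * (2 * π * f m * s)) * e s) := by
      intro s
      rw [hφ]
      simp only []
      rw [mul_assoc, Finset.sum_mul]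
      congr 1
      refine Finset.sum_congr rfl fun m _ => ?_
      ring
    simp_rw [h3]
    rw [intervalIntegral.integral_const_mul]
    have hterm : ∀ m ∈ Finset.Icc 1 N,
        (∫ s in (0:ℝ)..T, X m * (Complex.exp (Complex.I * (2 * π * f m * s)) * e s))
          = if m = n then X n * T else 0 := by
      intro m _
      rw [intervalIntegral.integral_const_mul]
      by_cases hmn : m = n
      · subst hmn
        rw [if_pos rfl]
        have hone : ∀ s : ℝ, Complex.exp (Complex.I * (2 * π * f m * s)) * e s = 1 := by
          intro s
          rw [he]
          simp only []
          rw [← Complex.exp_add]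
          rw [show Complex.I * (2 * π * f m * s) + -Complex.I * (2 * π * f m * s) = 0 by ring]
          exact Complex.exp_zero
        simp_rw [hone]
        simp
      · rw [if_neg hmn]
        have hexp : ∀ s : ℝ, Complex.exp (Complex.I * (2 * π * f m * s)) * e s
            = Complex.exp ((Complex.I * (2 * π * (((m:ℝ) - (n:ℝ)) / T))) * s) := by
          intro s
          rw [he]
          simp only []
          rw [← Complex.exp_add]
          congr 1
          rw [hf m, hf n, hc m, hc n]
          push_cast
          field_simp
          ring
        simp_rw [hexp]
        have hk : ((m:ℝ) - (n:ℝ)) ≠ 0 := by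
          intro hcon
          apply hmn
          exact_mod_cast sub_eq_zero.mp hcon
        have hcne : (Complex.I * (2 * π * (((m:ℝ) - (n:ℝ)) / T))) ≠ 0 := by
          refine mul_ne_zero Complex.I_ne_zero ?_
          have hr : (2 * π * (((m:ℝ) - (n:ℝ)) / T)) ≠ 0 :=
            mul_ne_zero (mul_ne_zero two_ne_zero Real.pi_ne_zero) (div_ne_zero hk hT.ne')
          have := Complex.ofReal_ne_zero.mpr hr
          push_cast at this
          convert this using 2
          simp
        rw [integral_exp_mul_complex hcne]
        have hz : (Complex.I * (2 * π * (((m:ℝ) - (n:ℝ)) / T))) * (T : ℂ)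
            = ((((m : ℤ) - (n : ℤ) : ℤ)) : ℂ) * (2 * π * Complex.I) := by
          push_cast
          field_simp
        rw [hz, Complex.exp_int_mul_two_pi_mul_I]
        simp
    have hii : ∀ m ∈ Finset.Icc 1 N, IntervalIntegrable
        (fun s : ℝ => X m * (Complex.exp (Complex.I * (2 * π * f m * s)) * e s))
        volume 0 T := by
      intro m _
      apply Continuous.intervalIntegrable
      exact continuous_const.mul ((Complex.continuous_exp.comp (by fun_prop)).mul hecont)
    rw [intervalIntegral.integral_finset_sum hii]
    rw [Finset.sum_congr rfl hterm, Finset.sum_ite_eq' (Finset.Icc 1 N) n (fun _ => X n * (T:ℂ))]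
    rw [if_pos hn]
    have hsq : (1 / Real.sqrt T) * T = Real.sqrt T := by
      rw [one_div, inv_mul_eq_div, Real.div_sqrt]
    calc ((1 / Real.sqrt T : ℝ) : ℂ) * (X n * T) = (((1 / Real.sqrt T) * T : ℝ) : ℂ) * X n := by
          push_cast; ring
      _ = ((Real.sqrt T : ℝ) : ℂ) * X n := by rw [hsq]
  -- the g-integral
  have hge : (∫ τ : ℝ, g τ * e τ) = G (f n) := by
    rw [hG (f n)]
    have h1 : (∫ τ : ℝ, g τ * e τ) = ∫ τ in Set.Icc (0:ℝ) Tg, g τ * e τ := by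
      refine (setIntegral_eq_integral_of_forall_compl_eq_zero ?_).symm
      intro τ hτ
      rw [hgsupp τ hτ, zero_mul]
    rw [h1, MeasureTheory.integral_Icc_eq_integral_Ioc,
      ← intervalIntegral.integral_of_le hTg.le]
  -- main computation
  rw [intervalIntegral.integral_of_le hTr0,
    setIntegral_eq_integral_of_forall_compl_eq_zero (fun t ht => by rw [hzero t ht, zero_mul])]
  have hswap : (∫ t : ℝ, (∫ τ : ℝ, g τ * x (t - τ)) * e t)
      = ∫ τ : ℝ, ∫ t : ℝ, g τ * x (t - τ) * e t := by
    have h1 : ∀ t : ℝ, (∫ τ : ℝ, g τ * x (t - τ)) * e t = ∫ τ : ℝ, g τ * x (t - τ) * e t :=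
      fun t => (integral_mul_const _ _).symm
    simp_rw [h1]
    exact integral_integral_swap (f := fun t τ => g τ * x (t - τ) * e t) hF
  rw [hswap]
  have h2 : ∀ τ : ℝ, (∫ t : ℝ, g τ * x (t - τ) * e t)
      = g τ * e τ * (∫ s : ℝ, x s * e s) := by
    intro τ
    have h3 : (fun t : ℝ => g τ * x (t - τ) * e t) = fun t : ℝ => g τ * (x (t - τ) * e t) := by
      funext t; ring
    rw [h3, integral_const_mul, hkey τ]
    ring
  simp_rw [h2]
  rw [integral_mul_const, hge, hxe]
  ring
end

section
/- Let N be an odd positive integer and for n ∈ {1,…,N} set c_n = n − 1 − (N−1)/2. Let L_s, L_r > 0 and let g : ℝ → ℂ be continuous and integrable, with Fourier transform G(κ) = ∫_ℝ g(z) e^{−iκz} dz also integrable. Then for all n, m ∈ {1,…,N}, ∫_{−L_r/2}^{L_r/2} ∫_{−L_s/2}^{L_s/2} g(r − s) · e^{−i 2π c_n r/L_s} · (1/√L_s) e^{i 2π c_m s/L_s} ds dr = (√L_s · L_r/(2π)) ∫_ℝ G(κ) · sinc((κ/(2π) − c_n/L_s)·L_r) · sinc((κ/(2π) − c_m/L_s)·L_s)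 dκ. -/
open MeasureTheory Filter Real

lemma sinc_neg (x : ℝ) : _root_.sinc (-x) = _root_.sinc x := by
  unfold _root_.sinc
  rcases eq_or_ne x 0 with h | h
  · simp [h]
  · rw [if_neg (neg_ne_zero.2 h), if_neg h, mul_neg, Real.sin_neg]
    ring

lemma norm_cexp_eq_one {z : ℂ} (h : z.re = 0) : ‖Complex.exp z‖ = 1 := by
  rw [Complex.norm_exp, h, Real.exp_zero]

open intervalIntegral in
lemma integral_exp_I_mul (L : ℝ) (hL : 0 < L) (β : ℝ) :
    (∫ x in (-(L/2))..(L/2), Complex.exp (Complex.I * β * x))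
      = ((L * _root_.sinc (β * L / (2*π)) : ℝ) : ℂ) := by
  rcases eq_or_ne β 0 with hβ | hβ
  · simp [hβ, _root_.sinc]
  · have hβ' : (β : ℂ) ≠ 0 := Complex.ofReal_ne_zero.2 hβ
    have hc : Complex.I * (β : ℂ) ≠ 0 := mul_ne_zero Complex.I_ne_zero hβ'
    rw [integral_exp_mul_complex hc]
    have e1 : Complex.I * β * ((L/2 : ℝ) : ℂ) = ((β*L/2 : ℝ) : ℂ) * Complex.I := by push_cast; ring
    have e2 : Complex.I * β * ((-(L/2) : ℝ) : ℂ) = (-((β*L/2 : ℝ) : ℂ)) * Complex.I := by push_cast; ring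
    rw [e1, e2, Complex.exp_mul_I, Complex.exp_mul_I, Complex.cos_neg, Complex.sin_neg]
    have harg : β * L / (2*π) ≠ 0 :=
      div_ne_zero (mul_ne_zero hβ hL.ne') (by positivity)
    rw [_root_.sinc, if_neg harg]
    have hπ : (π : ℝ) ≠ 0 := Real.pi_ne_zero
    have hrw : π * (β * L / (2*π)) = β * L / 2 := by field_simp
    rw [hrw]
    have hL' : (L : ℂ) ≠ 0 := Complex.ofReal_ne_zero.2 hL.ne'
    push_cast [← Complex.ofReal_sin]
    field_simp
    push_cast
    ring

/-- Fubini swap for an integral over a bounded interval against an integral over `ℝ`. -/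
lemma swap_helper {a b : ℝ} {f : ℝ → ℝ → ℂ} {H : ℝ → ℝ}
    (hmeas : AEStronglyMeasurable (Function.uncurry f)
      ((volume.restrict (Set.Ioc a b)).prod volume))
    (hH : Integrable H) (hbd : ∀ x κ, ‖f x κ‖ ≤ H κ) :
    ∫ x in Set.Ioc a b, (∫ κ, f x κ) = ∫ κ, (∫ x in Set.Ioc a b, f x κ) := by
  apply MeasureTheory.integral_integral_swap
  have hbound : Integrable (fun p : ℝ × ℝ => (1 : ℝ) * H p.2)
      ((volume.restrict (Set.Ioc a b)).prod volume) := by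
    exact Integrable.mul_prod (f := fun _ : ℝ => (1:ℝ)) (g := H)
      (integrableOn_const (C := (1:ℝ)) measure_Ioc_lt_top.ne) hH
  apply Integrable.mono' hbound hmeas
  filter_upwards with p
  exact le_of_le_of_eq (hbd p.1 p.2) (one_mul _).symm

/-- Wavenumber-domain reformulation of the WDM coupling coefficients (eqs. (55)–(56) of the
paper): the spatial double integral of `g(r−s)` against the transmit and receive Fourier
modes equals `(√L_s L_r/(2π)) ∫ G(κ) _root_.sinc((κ/(2π) − c_n/L_s)L_r) _root_.sinc((κ/(2π) − c_m/L_s)L_s) dκ`. -/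
theorem wdm_coupling_coefficient_wavenumber_domain
    (N : ℕ) (hN : Odd N) (hNpos : 0 < N)
    (c : ℕ → ℝ) (hc : ∀ k, c k = (k : ℝ) - 1 - ((N : ℝ) - 1) / 2)
    (Ls Lr : ℝ) (hLs : 0 < Ls) (hLr : 0 < Lr)
    (g : ℝ → ℂ) (hgcont : Continuous g) (hgint : Integrable g)
    (G : ℝ → ℂ)
    (hG : ∀ κ : ℝ, G κ = ∫ z : ℝ, g z * Complex.exp (-Complex.I * κ * z))
    (hGint : Integrable G)
    (n m : ℕ) (hn : n ∈ Finset.Icc 1 N) (hm : m ∈ Finset.Icc 1 N) :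
    (∫ r in (-(Lr / 2))..(Lr / 2), ∫ s in (-(Ls / 2))..(Ls / 2),
        g (r - s) * Complex.exp (-Complex.I * (2 * π * c n * r / Ls)) *
          ((1 / Real.sqrt Ls : ℝ) : ℂ) * Complex.exp (Complex.I * (2 * π * c m * s / Ls)))
      = ((Real.sqrt Ls * Lr / (2 * π) : ℝ) : ℂ) *
          ∫ κ : ℝ, G κ * ((_root_.sinc ((κ / (2 * π) - c n / Ls) * Lr) : ℝ) : ℂ) *
            ((_root_.sinc ((κ / (2 * π) - c m / Ls) * Ls) : ℝ) : ℂ) := by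
  have hπ : (0:ℝ) < π := Real.pi_pos
  have h2π : (2*π : ℝ) ≠ 0 := by positivity
  -- Fourier transform of g in Mathlib's convention
  have hFg : ∀ ξ : ℝ, FourierTransform.fourier g ξ = G (2*π*ξ) := by
    intro ξ
    rw [Real.fourier_real_eq_integral_exp_smul, hG]
    congr 1
    funext z
    rw [smul_eq_mul, mul_comm]
    congr 1
    congr 1
    push_cast
    ring
  have hFg' : FourierTransform.fourier g = fun ξ : ℝ => G (2*π*ξ) := funext hFg
  have hFint : Integrable (FourierTransform.fourier g) := by
    rw [hFg']
    exact hGint.comp_mul_left' h2π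
  -- continuity of G
  have hL : Continuous fun p : ℝ × ℝ => (innerₗ ℝ) p.1 p.2 := by
    simp only [innerₗ_apply_apply]
    exact continuous_inner
  have hFcont : Continuous (FourierTransform.fourier g) := by
    have hdef : FourierTransform.fourier g
        = VectorFourier.fourierIntegral Real.fourierChar volume (innerₗ ℝ) g := by
      funext w; rfl
    rw [hdef]
    exact VectorFourier.fourierIntegral_continuous Real.continuous_fourierChar hL hgint
  have hGcont : Continuous G := by
    have hGeq : G = fun κ : ℝ => FourierTransform.fourier g (κ/(2*π)) := by
      funext κ
      rw [hFg]
      congr 1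
      field_simp
    rw [hGeq]
    exact hFcont.comp (continuous_id.div_const _)
  -- Fourier inversion
  have hinv : ∀ z : ℝ, g z = (2*π)⁻¹ • ∫ κ : ℝ, G κ * Complex.exp (Complex.I * κ * z) := by
    intro z
    have h1 : FourierTransformInv.fourierInv (FourierTransform.fourier g) z = g z :=
      hgint.fourierInv_fourier_eq hFint hgcont.continuousAt
    rw [← h1, Real.fourierInv_eq_fourier_neg,
      Real.fourier_real_eq_integral_exp_smul]
    have h2 : (fun ξ : ℝ => Complex.exp (((-2*π*ξ*(-z) : ℝ) : ℂ) * Complex.I) • FourierTransform.fourier g ξ)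
        = fun ξ : ℝ => (fun κ : ℝ => G κ * Complex.exp (Complex.I * κ * z)) (2*π*ξ) := by
      funext ξ
      simp only
      rw [hFg ξ, smul_eq_mul, mul_comm]
      congr 2
      push_cast
      ring
    rw [h2, MeasureTheory.Measure.integral_comp_mul_left
      (fun κ : ℝ => G κ * Complex.exp (Complex.I * κ * z)) (2*π)]
    rw [abs_of_pos (by positivity : (0:ℝ) < (2*π)⁻¹)]
  have hLr' : -(Lr/2) ≤ Lr/2 := by linarith
  have hLs' : -(Ls/2) ≤ Ls/2 := by linarith
  -- Step 1 : inner integral over s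
  have step1 : ∀ r : ℝ,
      (∫ s in (-(Ls/2))..(Ls/2),
        g (r - s) * Complex.exp (-Complex.I * (2 * π * c n * r / Ls)) *
          ((1 / Real.sqrt Ls : ℝ) : ℂ) * Complex.exp (Complex.I * (2 * π * c m * s / Ls)))
      = ((1/Real.sqrt Ls) * (2*π)⁻¹ : ℝ) •
          ∫ κ : ℝ, (G κ * ((Ls * _root_.sinc ((κ / (2*π) - c m / Ls) * Ls) : ℝ) : ℂ)) *
            (Complex.exp (Complex.I * κ * r) * Complex.exp (-Complex.I * (2 * π * c n * r / Ls))) := by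
    intro r
    have e0 : (∫ s in (-(Ls/2))..(Ls/2),
        g (r - s) * Complex.exp (-Complex.I * (2 * π * c n * r / Ls)) *
          ((1 / Real.sqrt Ls : ℝ) : ℂ) * Complex.exp (Complex.I * (2 * π * c m * s / Ls)))
        = (Complex.exp (-Complex.I * (2 * π * c n * r / Ls)) * ((1 / Real.sqrt Ls : ℝ) : ℂ)) *
          ∫ s in (-(Ls/2))..(Ls/2), g (r - s) * Complex.exp (Complex.I * (2 * π * c m * s / Ls)) := by
      rw [← intervalIntegral.integral_const_mul]
      apply intervalIntegral.integral_congr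
      intro s _
      ring
    rw [e0, intervalIntegral.integral_of_le hLs']
    have h1 : ∀ s : ℝ, g (r - s) * Complex.exp (Complex.I * (2 * π * c m * s / Ls))
        = (2*π)⁻¹ • ∫ κ : ℝ, G κ * (Complex.exp (Complex.I * κ * (r - s)) *
            Complex.exp (Complex.I * (2 * π * c m * s / Ls))) := by
      intro s
      rw [hinv (r - s), smul_mul_assoc, ← MeasureTheory.integral_mul_const]
      congr 1
      exact MeasureTheory.integral_congr_ae (.of_forall fun κ => by push_cast; ring)
    simp only [h1]
    rw [MeasureTheory.integral_smul]
    have hswap : ∫ s in Set.Ioc (-(Ls/2)) (Ls/2),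
        (∫ κ : ℝ, G κ * (Complex.exp (Complex.I * κ * (r - s)) *
            Complex.exp (Complex.I * (2 * π * c m * s / Ls))))
        = ∫ κ : ℝ, ∫ s in Set.Ioc (-(Ls/2)) (Ls/2),
            G κ * (Complex.exp (Complex.I * κ * (r - s)) *
              Complex.exp (Complex.I * (2 * π * c m * s / Ls))) := by
      apply swap_helper (H := fun κ => ‖G κ‖) _ hGint.norm
      · intro s κ
        rw [norm_mul, norm_mul, norm_cexp_eq_one (by simp), norm_cexp_eq_one (by simp)]
        simp
      · apply Continuous.aestronglyMeasurable
        apply (hGcont.comp continuous_snd).mul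
        apply Continuous.mul
        · exact Complex.continuous_exp.comp (by fun_prop)
        · exact Complex.continuous_exp.comp (by fun_prop)
    rw [hswap]
    have hinner : ∀ κ : ℝ, (∫ s in Set.Ioc (-(Ls/2)) (Ls/2),
        G κ * (Complex.exp (Complex.I * κ * (r - s)) *
          Complex.exp (Complex.I * (2 * π * c m * s / Ls))))
        = (G κ * ((Ls * _root_.sinc ((κ / (2*π) - c m / Ls) * Ls) : ℝ) : ℂ)) * Complex.exp (Complex.I * κ * r) := by
      intro κ
      have hexp : ∀ s : ℝ, G κ * (Complex.exp (Complex.I * κ * (r - s)) *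
            Complex.exp (Complex.I * (2 * π * c m * s / Ls)))
          = (G κ * Complex.exp (Complex.I * κ * r)) *
              Complex.exp (Complex.I * ((2*π*c m/Ls - κ : ℝ) : ℂ) * s) := by
        intro s
        rw [mul_assoc (G κ), ← Complex.exp_add, ← Complex.exp_add]
        congr 2
        push_cast
        field_simp
        ring
      simp only [hexp]
      rw [MeasureTheory.integral_const_mul, ← intervalIntegral.integral_of_le hLs',
        integral_exp_I_mul Ls hLs]
      have hsarg : (2*π*c m/Ls - κ) * Ls / (2*π) = -((κ / (2*π) - c m / Ls) * Ls) := by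
        field_simp
        ring
      rw [hsarg, _root_.sinc_neg]
      ring
    simp only [hinner]
    have hR : (∫ κ : ℝ, (G κ * ((Ls * _root_.sinc ((κ / (2*π) - c m / Ls) * Ls) : ℝ) : ℂ)) *
          (Complex.exp (Complex.I * κ * r) * Complex.exp (-Complex.I * (2 * π * c n * r / Ls))))
        = (∫ κ : ℝ, (G κ * ((Ls * _root_.sinc ((κ / (2*π) - c m / Ls) * Ls) : ℝ) : ℂ)) * Complex.exp (Complex.I * κ * r)) *
            Complex.exp (-Complex.I * (2 * π * c n * r / Ls)) := by
      rw [← MeasureTheory.integral_mul_const]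
      exact MeasureTheory.integral_congr_ae (.of_forall fun κ => by ring)
    rw [hR, Complex.real_smul, Complex.real_smul]
    push_cast
    ring
  rw [intervalIntegral.integral_of_le hLr']
  simp only [step1]
  rw [MeasureTheory.integral_smul]
  have hswap2 : (∫ r in Set.Ioc (-(Lr/2)) (Lr/2), ∫ κ : ℝ,
        (G κ * ((Ls * _root_.sinc ((κ / (2*π) - c m / Ls) * Ls) : ℝ) : ℂ)) *
        (Complex.exp (Complex.I * κ * r) * Complex.exp (-Complex.I * (2 * π * c n * r / Ls))))
      = ∫ κ : ℝ, ∫ r in Set.Ioc (-(Lr/2)) (Lr/2),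
        (G κ * ((Ls * _root_.sinc ((κ / (2*π) - c m / Ls) * Ls) : ℝ) : ℂ)) *
        (Complex.exp (Complex.I * κ * r) * Complex.exp (-Complex.I * (2 * π * c n * r / Ls))) := by
    apply swap_helper (H := fun κ => Ls * ‖G κ‖) _ (hGint.norm.const_mul Ls)
    · intro r κ
      rw [norm_mul, norm_mul, norm_mul, norm_cexp_eq_one (by simp), norm_cexp_eq_one (by simp),
        Complex.norm_real, Real.norm_eq_abs]
      have h1 : |Ls * _root_.sinc ((κ / (2*π) - c m / Ls) * Ls)| ≤ Ls := by
        rw [abs_mul, abs_of_pos hLs]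
        have h2 := _root_.abs_sinc_le_one ((κ / (2*π) - c m / Ls) * Ls)
        nlinarith
      have h2 : (0:ℝ) ≤ ‖G κ‖ := norm_nonneg _
      calc ‖G κ‖ * |Ls * _root_.sinc ((κ / (2*π) - c m / Ls) * Ls)| * (1 * 1)
          = |Ls * _root_.sinc ((κ / (2*π) - c m / Ls) * Ls)| * ‖G κ‖ := by ring
        _ ≤ Ls * ‖G κ‖ := by nlinarith
    · have hm1 : Measurable fun p : ℝ × ℝ =>
          ((Ls * _root_.sinc ((p.2 / (2*π) - c m / Ls) * Ls) : ℝ) : ℂ) :=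
        Complex.measurable_ofReal.comp ((_root_.measurable_sinc.comp
          (by fun_prop : Measurable fun p : ℝ × ℝ => (p.2/(2*π) - c m/Ls)*Ls)).const_mul Ls)
      exact (((hGcont.comp continuous_snd).aestronglyMeasurable.mul
        hm1.aestronglyMeasurable).mul
        (((Complex.continuous_exp.comp (by fun_prop)).mul
          (Complex.continuous_exp.comp (by fun_prop))).aestronglyMeasurable))
  rw [hswap2]
  have hinner2 : ∀ κ : ℝ, (∫ r in Set.Ioc (-(Lr/2)) (Lr/2),
        (G κ * ((Ls * _root_.sinc ((κ / (2*π) - c m / Ls) * Ls) : ℝ) : ℂ)) *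
        (Complex.exp (Complex.I * κ * r) * Complex.exp (-Complex.I * (2 * π * c n * r / Ls))))
      = (G κ * ((Ls * _root_.sinc ((κ / (2*π) - c m / Ls) * Ls) : ℝ) : ℂ)) *
          ((Lr * _root_.sinc ((κ / (2*π) - c n / Ls) * Lr) : ℝ) : ℂ) := by
    intro κ
    have hexp : ∀ r : ℝ, Complex.exp (Complex.I * κ * r) *
          Complex.exp (-Complex.I * (2 * π * c n * r / Ls))
        = Complex.exp (Complex.I * ((κ - 2*π*c n/Ls : ℝ) : ℂ) * r) := by
      intro r
      rw [← Complex.exp_add]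
      congr 1
      have hLs0 : (Ls:ℂ) ≠ 0 := Complex.ofReal_ne_zero.2 hLs.ne'
      push_cast
      field_simp
      ring
    simp only [hexp]
    rw [MeasureTheory.integral_const_mul, ← intervalIntegral.integral_of_le hLr',
      integral_exp_I_mul Lr hLr]
    have harg : (κ - 2*π*c n/Ls) * Lr / (2*π) = (κ/(2*π) - c n/Ls) * Lr := by
      have hLs0 : Ls ≠ 0 := hLs.ne'
      field_simp
    rw [harg]
  simp only [hinner2]
  have hfin : (∫ κ : ℝ, (G κ * ((Ls * _root_.sinc ((κ / (2*π) - c m / Ls) * Ls) : ℝ) : ℂ)) *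
        ((Lr * _root_.sinc ((κ / (2*π) - c n / Ls) * Lr) : ℝ) : ℂ))
      = ((Ls * Lr : ℝ) : ℂ) * ∫ κ : ℝ, G κ * ((_root_.sinc ((κ / (2 * π) - c n / Ls) * Lr) : ℝ) : ℂ) *
          ((_root_.sinc ((κ / (2 * π) - c m / Ls) * Ls) : ℝ) : ℂ) := by
    rw [← MeasureTheory.integral_const_mul]
    exact MeasureTheory.integral_congr_ae (.of_forall fun κ => by push_cast; ring)
  rw [hfin, Complex.real_smul]
  have hsq : Real.sqrt Ls * Real.sqrt Ls = Ls := Real.mul_self_sqrt hLs.le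
  have hsqrt : Real.sqrt Ls ≠ 0 := (Real.sqrt_pos.2 hLs).ne'
  have hscal : Real.sqrt Ls * Lr / (2*π) = ((1/Real.sqrt Ls) * (2*π)⁻¹) * (Ls * Lr) := by
    calc Real.sqrt Ls * Lr / (2*π) = (Ls / Real.sqrt Ls) * Lr / (2*π) := by
          rw [Real.div_sqrt]
      _ = ((1/Real.sqrt Ls) * (2*π)⁻¹) * (Ls * Lr) := by ring
  rw [hscal]
  push_cast
  ring
end
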